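/- Let C be a real symmetric positive definite n×n matrix and A a real m×n matrix of rank m (m ≤ n). Then G := A C⁻¹ Aᵀ is positive definite, and for every y ∈ ℝᵐ: det( C − Aᵀ D(y) A ) = det C · det G · det( G⁻¹ − D(y) ), where D(y) denotes the m×m diagonal matrix with the entries of y on the diagonal. Moreover, C − AᵀD(y)A is positive definite if and only if G⁻¹ − D(y) is positive definite. -/

import Mathlib

open Matrix

private lemma herm_iff_symm {k : ℕ} (M : Matrix (Fin k) (Fin k) ℝ) :
    M.IsHermitian ↔ Mᵀ = M := by
  rw [Matrix.IsHermitian, Matrix.conjTranspose_eq_transpose_of_trivial]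

private lemma quad_symm {k : ℕ} (M : Matrix (Fin k) (Fin k) ℝ) (hM : Mᵀ = M)
    (a b : Fin k → ℝ) : a ⬝ᵥ M *ᵥ b = b ⬝ᵥ M *ᵥ a := by
  rw [Matrix.dotProduct_mulVec, ← Matrix.mulVec_transpose, hM, dotProduct_comm]

private lemma dot_transpose {m n : ℕ} (A : Matrix (Fin m) (Fin n) ℝ)
    (a : Fin n → ℝ) (z : Fin m → ℝ) : a ⬝ᵥ Aᵀ *ᵥ z = (A *ᵥ a) ⬝ᵥ z := by
  rw [Matrix.dotProduct_mulVec, Matrix.vecMul_transpose]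

/-- Lemma 8.1 of the paper, determinant representation. Let `C` be symmetric
positive definite `n×n` and `A` an `m×n` matrix of full row rank `m ≤ n`.  Then
`G = A C⁻¹ Aᵀ` is positive definite and for every `y ∈ ℝᵐ`:
`det(C - Aᵀ D(y) A) = det C · det G · det(G⁻¹ - D(y))`, and `C - Aᵀ D(y) A` is positive
definite iff `G⁻¹ - D(y)` is positive definite. -/
theorem stmt15 {m n : ℕ} (hmn : m ≤ n)
    (C : Matrix (Fin n) (Fin n) ℝ) (hC : C.PosDef)
    (A : Matrix (Fin m) (Fin n) ℝ) (hA : A.rank = m) :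
    (A * C⁻¹ * Aᵀ).PosDef ∧
    ∀ y : Fin m → ℝ,
      ((C - Aᵀ * Matrix.diagonal y * A).det
          = C.det * (A * C⁻¹ * Aᵀ).det * ((A * C⁻¹ * Aᵀ)⁻¹ - Matrix.diagonal y).det) ∧
      ((C - Aᵀ * Matrix.diagonal y * A).PosDef ↔
        ((A * C⁻¹ * Aᵀ)⁻¹ - Matrix.diagonal y).PosDef) := by
  classical
  -- basic facts about C
  have hCinv : (C⁻¹).PosDef := hC.inv
  have hCC : C * C⁻¹ = 1 := mul_nonsing_inv C ((isUnit_iff_isUnit_det C).mp hC.isUnit)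
  have hCsym : Cᵀ = C := (herm_iff_symm C).mp hC.isHermitian
  have hCinvsym : (C⁻¹)ᵀ = C⁻¹ := (herm_iff_symm _).mp hCinv.isHermitian
  -- injectivity of `Aᵀ *ᵥ ·`
  have hinj : ∀ v : Fin m → ℝ, Aᵀ *ᵥ v = 0 → v = 0 := by
    intro v hv
    have hrank : Aᵀ.rank = m := by rw [Matrix.rank_transpose, hA]
    have h1 : Module.finrank ℝ (LinearMap.range Aᵀ.mulVecLin)
        + Module.finrank ℝ (LinearMap.ker Aᵀ.mulVecLin) = m := by
      simpa using LinearMap.finrank_range_add_finrank_ker Aᵀ.mulVecLin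
    have hker : Module.finrank ℝ (LinearMap.ker Aᵀ.mulVecLin) = 0 := by
      have h2 : Aᵀ.rank = Module.finrank ℝ (LinearMap.range Aᵀ.mulVecLin) := rfl
      omega
    have hbot : LinearMap.ker Aᵀ.mulVecLin = ⊥ := Submodule.finrank_eq_zero.mp hker
    have hvmem : v ∈ LinearMap.ker Aᵀ.mulVecLin := by
      rw [LinearMap.mem_ker, Matrix.mulVecLin_apply]; exact hv
    rw [hbot, Submodule.mem_bot] at hvmem
    exact hvmem
  -- G is positive definite
  set G := A * C⁻¹ * Aᵀ with hGdef
  have hGsym : Gᵀ = G := by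
    simp [hGdef, Matrix.transpose_mul, hCinvsym, Matrix.mul_assoc]
  have hGherm : G.IsHermitian := (herm_iff_symm G).mpr hGsym
  have hquadG : ∀ x : Fin m → ℝ, x ⬝ᵥ G *ᵥ x = (Aᵀ *ᵥ x) ⬝ᵥ C⁻¹ *ᵥ (Aᵀ *ᵥ x) := by
    intro x
    rw [hGdef, ← Matrix.mulVec_mulVec, ← Matrix.mulVec_mulVec,
      Matrix.dotProduct_mulVec, ← Matrix.mulVec_transpose]
  have hG : G.PosDef := by
    refine Matrix.PosDef.of_dotProduct_mulVec_pos hGherm (fun x hx => ?_)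
    have hx' : Aᵀ *ᵥ x ≠ 0 := fun h => hx (hinj x h)
    have := hCinv.dotProduct_mulVec_pos hx'
    simpa [hquadG x] using this
  have hGG : G * G⁻¹ = 1 := mul_nonsing_inv G ((isUnit_iff_isUnit_det G).mp hG.isUnit)
  have hGinvsym : (G⁻¹)ᵀ = G⁻¹ := by
    rw [Matrix.transpose_nonsing_inv, hGsym]
  refine ⟨hG, fun y => ?_⟩
  set D := Matrix.diagonal y with hDdef
  have hDsym : Dᵀ = D := Matrix.diagonal_transpose y
  -- auxiliary computations with `w z := C⁻¹ *ᵥ (Aᵀ *ᵥ z)`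
  have hAw : ∀ z : Fin m → ℝ, A *ᵥ (C⁻¹ *ᵥ (Aᵀ *ᵥ z)) = G *ᵥ z := by
    intro z
    rw [Matrix.mulVec_mulVec, Matrix.mulVec_mulVec, hGdef]
  have hCw : ∀ z : Fin m → ℝ, C *ᵥ (C⁻¹ *ᵥ (Aᵀ *ᵥ z)) = Aᵀ *ᵥ z := by
    intro z
    rw [Matrix.mulVec_mulVec, hCC, Matrix.one_mulVec]
  have hGv : ∀ u : Fin m → ℝ, G *ᵥ (G⁻¹ *ᵥ u) = u := by
    intro u
    rw [Matrix.mulVec_mulVec, hGG, Matrix.one_mulVec]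
  -- quadratic form of `C - Aᵀ D A`
  have hquadC : ∀ x : Fin n → ℝ,
      x ⬝ᵥ (C - Aᵀ * D * A) *ᵥ x
        = x ⬝ᵥ C *ᵥ x - (A *ᵥ x) ⬝ᵥ D *ᵥ (A *ᵥ x) := by
    intro x
    rw [Matrix.sub_mulVec, dotProduct_sub]
    congr 1
    rw [← Matrix.mulVec_mulVec, ← Matrix.mulVec_mulVec, dot_transpose]
  -- quadratic form of `G⁻¹ - D`
  have hquadGD : ∀ u : Fin m → ℝ,
      u ⬝ᵥ (G⁻¹ - D) *ᵥ u = u ⬝ᵥ G⁻¹ *ᵥ u - u ⬝ᵥ D *ᵥ u := by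
    intro u
    rw [Matrix.sub_mulVec, dotProduct_sub]
  -- the Cauchy-Schwarz type inequality :  u ⬝ᵥ G⁻¹ u ≤ x ⬝ᵥ C x  for u = A *ᵥ x
  have hCS : ∀ x : Fin n → ℝ,
      (A *ᵥ x) ⬝ᵥ G⁻¹ *ᵥ (A *ᵥ x) ≤ x ⬝ᵥ C *ᵥ x := by
    intro x
    set u := A *ᵥ x with hu
    set z := G⁻¹ *ᵥ u with hz
    set w := C⁻¹ *ᵥ (Aᵀ *ᵥ z) with hw
    have h0 : 0 ≤ (x - w) ⬝ᵥ C *ᵥ (x - w) := by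
      have := hC.posSemidef.dotProduct_mulVec_nonneg (x - w)
      simpa using this
    have hxCw : x ⬝ᵥ C *ᵥ w = u ⬝ᵥ z := by
      rw [hw, hCw, dot_transpose]
    have hwCx : w ⬝ᵥ C *ᵥ x = u ⬝ᵥ z := by
      rw [quad_symm C hCsym, hxCw]
    have hwCw : w ⬝ᵥ C *ᵥ w = u ⬝ᵥ z := by
      rw [hw, hCw, dot_transpose, hAw, hz, hGv]
    have hexp : (x - w) ⬝ᵥ C *ᵥ (x - w)
        = x ⬝ᵥ C *ᵥ x - u ⬝ᵥ z := by
      rw [Matrix.mulVec_sub, sub_dotProduct, dotProduct_sub, dotProduct_sub,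
        hxCw, hwCx, hwCw]
      ring
    linarith [h0, hexp]
  constructor
  · -- the determinant identity
    have e1 : C * (1 - C⁻¹ * (Aᵀ * D * A)) = C - Aᵀ * D * A := by
      rw [Matrix.mul_sub, Matrix.mul_one, ← Matrix.mul_assoc, hCC, Matrix.one_mul]
    have e2 : C⁻¹ * (Aᵀ * D * A) = (C⁻¹ * Aᵀ * D) * A := by
      rw [Matrix.mul_assoc, Matrix.mul_assoc, Matrix.mul_assoc]
    have e3 : A * (C⁻¹ * Aᵀ * D) = G * D := by
      rw [hGdef, Matrix.mul_assoc, Matrix.mul_assoc, Matrix.mul_assoc]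
    have e4 : G * (G⁻¹ - D) = 1 - G * D := by
      rw [Matrix.mul_sub, hGG]
    calc (C - Aᵀ * D * A).det
        = C.det * (1 - C⁻¹ * (Aᵀ * D * A)).det := by rw [← e1, Matrix.det_mul]
      _ = C.det * (1 - (C⁻¹ * Aᵀ * D) * A).det := by rw [e2]
      _ = C.det * (1 - A * (C⁻¹ * Aᵀ * D)).det := by
          rw [Matrix.det_one_sub_mul_comm]
      _ = C.det * (G * (G⁻¹ - D)).det := by rw [e3, e4]
      _ = C.det * G.det * (G⁻¹ - D).det := by rw [Matrix.det_mul]; ring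
  · -- the positive definiteness equivalence
    constructor
    · intro h
      refine Matrix.PosDef.of_dotProduct_mulVec_pos ((herm_iff_symm _).mpr (by rw [Matrix.transpose_sub, hGinvsym, hDsym])) ?_
      intro v hv
      set x := C⁻¹ *ᵥ (Aᵀ *ᵥ (G⁻¹ *ᵥ v)) with hx
      have hAx : A *ᵥ x = v := by rw [hx, hAw, hGv]
      have hxne : x ≠ 0 := by
        intro h0
        apply hv
        rw [← hAx, h0, Matrix.mulVec_zero]
      have hpos := h.dotProduct_mulVec_pos hxne
      rw [star_trivial, hquadC x, hAx] at hpos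
      have hxCx : x ⬝ᵥ C *ᵥ x = v ⬝ᵥ G⁻¹ *ᵥ v := by
        rw [hx, hCw, dot_transpose, ← hx, hAx, dotProduct_comm]
      rw [star_trivial, hquadGD v]
      rw [hxCx] at hpos
      linarith
    · intro h
      refine Matrix.PosDef.of_dotProduct_mulVec_pos ((herm_iff_symm _).mpr (by
        rw [Matrix.transpose_sub, hCsym, Matrix.transpose_mul, Matrix.transpose_mul,
          Matrix.transpose_transpose, hDsym, Matrix.mul_assoc])) ?_
      intro x hx
      rw [star_trivial, hquadC x]
      by_cases hu : A *ᵥ x = 0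
      · rw [hu]
        have := hC.dotProduct_mulVec_pos hx
        rw [star_trivial] at this
        simpa using this
      · have h1 := h.dotProduct_mulVec_pos hu
        rw [star_trivial, hquadGD] at h1
        have h2 := hCS x
        linarith
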